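/- Fix d ∈ ℕ and R > 0, and let f : ℝ^d → ℂ be a smooth (infinitely differentiable) function. The following are equivalent: (1) for every r with 0 < r < R and every k ∈ ℕ there exists C > 0 such that ‖iteratedFDeriv ℝ k f v‖ ≤ C · exp(−r·‖v‖) for all v ∈ ℝ^d; (2) for every r with 0 < r < R, the function v ↦ f(v) · exp(r·√(1 + ‖v‖²)) is a Schwartz function on ℝ^d. -/

import Mathlib

open MeasureTheory
open scoped ContDiff

section aux
variable {E : Type*} [NormedAddCommGroup E] [InnerProductSpace ℝ E]

set_option synthInstance.maxHeartbeats 800000 in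
set_option maxHeartbeats 1000000 in
lemma edds_htg_q : Function.HasTemperateGrowth (fun x : E => 1 + ‖x‖^2) := by
  set L : E →L[ℝ] E →L[ℝ] ℝ := (2:ℝ) • innerSL ℝ with hL
  have h1 : ∀ x : E, HasFDerivAt (fun x : E => 1 + ‖x‖^2) (L x) x := by
    intro x
    have h2 : HasFDerivAt (fun x : E => 1 + ‖x‖^2) (2 • innerSL ℝ x) x :=
      (hasStrictFDerivAt_norm_sq x).hasFDerivAt.const_add 1
    convert h2 using 1
    ext y
    simp [hL, two_smul]; rfl
  refine Function.HasTemperateGrowth.of_fderiv ?_ (fun x => (h1 x).differentiableAt)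
    (k := 2) (C := 1) (fun x => ?_)
  · have h3 : fderiv ℝ (fun x : E => 1 + ‖x‖^2) = ⇑L := funext fun x => (h1 x).fderiv
    rw [h3]
    exact L.hasTemperateGrowth
  · have h4 : ‖(1 + ‖x‖^2 : ℝ)‖ = 1 + ‖x‖^2 := by
      rw [Real.norm_eq_abs, abs_of_pos (by positivity)]
    rw [h4]
    nlinarith [norm_nonneg x]

lemma edds_iteratedDeriv_sqrt (i : ℕ) : ∃ c : ℝ, ∀ t : ℝ, 0 < t →
    iteratedDeriv i Real.sqrt t = c * t ^ ((1:ℝ)/2 - i) := by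
  induction i with
  | zero =>
    exact ⟨1, fun t ht => by simp [Real.sqrt_eq_rpow]⟩
  | succ i ih =>
    obtain ⟨c, hc⟩ := ih
    refine ⟨c * ((1:ℝ)/2 - i), fun t ht => ?_⟩
    have heq : iteratedDeriv i Real.sqrt =ᶠ[nhds t] fun u => c * u ^ ((1:ℝ)/2 - i) := by
      filter_upwards [isOpen_Ioi.mem_nhds ht] with u hu using hc u hu
    rw [iteratedDeriv_succ, heq.deriv_eq]
    have hd : HasDerivAt (fun u : ℝ => c * u ^ ((1:ℝ)/2 - i))
        (c * (((1:ℝ)/2 - i) * t ^ ((1:ℝ)/2 - i - 1))) t :=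
      (Real.hasDerivAt_rpow_const (Or.inl ht.ne')).const_mul c
    rw [hd.deriv]
    rw [show (1:ℝ)/2 - (i+1:ℕ) = (1:ℝ)/2 - i - 1 by push_cast; ring]
    ring

lemma edds_psi_le (x : E) : Real.sqrt (1 + ‖x‖^2) ≤ 1 + ‖x‖ := by
  have h := Real.sqrt_le_sqrt (show 1 + ‖x‖^2 ≤ (1+‖x‖)^2 by nlinarith [norm_nonneg x])
  rwa [Real.sqrt_sq (by positivity)] at h

lemma edds_le_psi (x : E) : ‖x‖ ≤ Real.sqrt (1 + ‖x‖^2) := by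
  rw [Real.le_sqrt (norm_nonneg x) (by positivity)]
  linarith

lemma edds_contDiff_psi : ContDiff ℝ ∞ (fun x : E => Real.sqrt (1 + ‖x‖^2)) := by
  rw [contDiff_iff_contDiffAt]
  intro x
  exact ContDiffAt.sqrt (contDiffAt_const.add (contDiff_norm_sq ℝ).contDiffAt)
    (by positivity)

lemma edds_htg_psi : Function.HasTemperateGrowth (fun x : E => Real.sqrt (1 + ‖x‖^2)) := by
  refine ⟨edds_contDiff_psi, fun n => ?_⟩
  obtain ⟨kq, Cq, hCq0, hq⟩ := (edds_htg_q (E := E)).norm_iteratedFDeriv_le_uniform n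
  choose c hc using edds_iteratedDeriv_sqrt
  set M : ℝ := (∑ i ∈ Finset.range (n+1), |c i|) + 1 with hM
  have hM1 : ∀ i ≤ n, |c i| ≤ M := by
    intro i hi
    have h := Finset.single_le_sum (f := fun j => |c j|)
      (fun j _ => abs_nonneg (c j)) (Finset.mem_range_succ_iff.2 hi)
    simp only [hM]
    linarith
  have hM0 : 0 < M := by positivity
  refine ⟨kq * n + 1, (n.factorial : ℝ) * M * (max 1 Cq)^n, fun x => ?_⟩
  set t := ‖x‖ with ht
  have ht0 : 0 ≤ t := norm_nonneg x
  have h1t : (1:ℝ) ≤ 1 + t := by linarith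
  have hpow1 : (1:ℝ) ≤ (1+t)^kq := one_le_pow₀ h1t
  have key := norm_iteratedFDerivWithin_comp_le (𝕜 := ℝ) (g := Real.sqrt)
      (f := fun x : E => 1 + ‖x‖^2) (n := n) (s := Set.univ) (t := Set.Ioi 0) (x := x)
      (N := ∞)
      (fun u hu => (Real.contDiffAt_sqrt (ne_of_gt hu)).contDiffWithinAt)
      (edds_htg_q (E := E)).1.contDiffOn (mod_cast le_top) (uniqueDiffOn_Ioi 0)
      uniqueDiffOn_univ
      (fun y _ => Set.mem_Ioi.2 (by positivity)) (Set.mem_univ x)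
      (C := M * (1 + t)) (D := max 1 (Cq * (1+t)^kq)) ?_ ?_
  · have hcomp : (Real.sqrt ∘ fun x : E => 1 + ‖x‖^2)
        = fun x : E => Real.sqrt (1+‖x‖^2) := rfl
    rw [iteratedFDerivWithin_univ, hcomp] at key
    refine key.trans ?_
    have hDle : max 1 (Cq * (1+t)^kq) ≤ max 1 Cq * (1+t)^kq := by
      apply max_le
      · nlinarith [le_max_left (1:ℝ) Cq]
      · exact mul_le_mul_of_nonneg_right (le_max_right 1 Cq) (by positivity)
    have hD0 : (0:ℝ) ≤ max 1 (Cq * (1+t)^kq) := le_trans zero_le_one (le_max_left _ _)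
    calc (n.factorial : ℝ) * (M * (1+t)) * (max 1 (Cq * (1+t)^kq))^n
        ≤ (n.factorial : ℝ) * (M * (1+t)) * (max 1 Cq * (1+t)^kq)^n := by
          gcongr
      _ = (n.factorial : ℝ) * M * (max 1 Cq)^n * (1+t)^(kq*n+1) := by
          rw [mul_pow, ← pow_mul]
          ring
  · intro i hi
    have hpos2 : (0:ℝ) < 1 + ‖x‖^2 := by positivity
    rw [iteratedFDerivWithin_of_isOpen i isOpen_Ioi (Set.mem_Ioi.2 hpos2),
      norm_iteratedFDeriv_eq_norm_iteratedDeriv, hc i (1 + ‖x‖^2) hpos2,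
      Real.norm_eq_abs, abs_mul]
    have habs : |(1 + ‖x‖^2 : ℝ) ^ ((1:ℝ)/2 - (i:ℕ))| ≤ 1 + t := by
      rw [abs_of_nonneg (Real.rpow_nonneg hpos2.le _)]
      rcases Nat.eq_zero_or_pos i with h0 | hpos
      · subst h0
        rw [Nat.cast_zero, sub_zero, ← Real.sqrt_eq_rpow]
        exact edds_psi_le x
      · have h1 : (1 + ‖x‖^2 : ℝ) ^ ((1:ℝ)/2 - (i:ℕ)) ≤ 1 := by
          apply Real.rpow_le_one_of_one_le_of_nonpos (by nlinarith [sq_nonneg ‖x‖])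
          have h2 : (1:ℝ) ≤ (i:ℝ) := by exact_mod_cast hpos
          linarith
        linarith
    exact mul_le_mul (hM1 i hi) habs (abs_nonneg _) hM0.le
  · intro i h1i hin
    rw [iteratedFDerivWithin_univ]
    have hb := hq i hin x
    have hbase1 : (1:ℝ) ≤ max 1 (Cq * (1+t)^kq) := le_max_left _ _
    calc ‖iteratedFDeriv ℝ i (fun x : E => 1 + ‖x‖^2) x‖
        ≤ Cq * (1+t)^kq := hb
      _ ≤ max 1 (Cq * (1+t)^kq) := le_max_right _ _
      _ ≤ (max 1 (Cq * (1+t)^kq))^i := le_self_pow₀ hbase1 (Nat.one_le_iff_ne_zero.mp h1i)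

lemma edds_exp_psi_bound (s : ℝ) (n : ℕ) : ∃ (k : ℕ) (C : ℝ), 0 ≤ C ∧ ∀ x : E,
    ‖iteratedFDeriv ℝ n (fun v : E => Real.exp (s * Real.sqrt (1 + ‖v‖^2))) x‖ ≤
      C * (1 + ‖x‖)^k * Real.exp (s * Real.sqrt (1 + ‖x‖^2)) := by
  obtain ⟨kp, Cp, hCp0, hp⟩ := (edds_htg_psi (E := E)).norm_iteratedFDeriv_le_uniform n
  set A : ℝ := max 1 (|s| * Cp) with hA
  have hA1 : (1:ℝ) ≤ A := le_max_left _ _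
  refine ⟨kp * n, (n.factorial : ℝ) * A^n, by positivity, fun x => ?_⟩
  set t := ‖x‖ with ht
  have ht0 : 0 ≤ t := norm_nonneg x
  have h1t : (1:ℝ) ≤ 1 + t := by linarith
  have hpow1 : (1:ℝ) ≤ (1+t)^kp := one_le_pow₀ h1t
  have hψ : ContDiff ℝ ∞ (fun x : E => Real.sqrt (1+‖x‖^2)) := (edds_htg_psi (E := E)).1
  have hsψ : ContDiff ℝ ∞ (fun x : E => s * Real.sqrt (1+‖x‖^2)) := contDiff_const.mul hψ
  have key := norm_iteratedFDeriv_comp_le (𝕜 := ℝ) (g := Real.exp)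
      (f := fun v : E => s * Real.sqrt (1+‖v‖^2)) (n := n) (N := ∞) Real.contDiff_exp hsψ
      (mod_cast le_top) x (C := Real.exp (s * Real.sqrt (1+‖x‖^2)))
      (D := A * (1+t)^kp) ?_ ?_
  · have hcomp : (Real.exp ∘ fun v : E => s * Real.sqrt (1+‖v‖^2))
        = fun v : E => Real.exp (s * Real.sqrt (1+‖v‖^2)) := rfl
    rw [hcomp] at key
    refine key.trans (le_of_eq ?_)
    rw [mul_pow, ← pow_mul]
    ring
  · intro i _
    rw [norm_iteratedFDeriv_eq_norm_iteratedDeriv, iteratedDeriv_eq_iterate,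
      Real.iter_deriv_exp, Real.norm_eq_abs, abs_of_pos (Real.exp_pos _)]
  · intro i h1i hin
    rw [show (fun v : E => s * Real.sqrt (1+‖v‖^2))
          = s • (fun v : E => Real.sqrt (1+‖v‖^2)) from rfl,
      iteratedFDeriv_const_smul_apply (hψ.contDiffAt.of_le (by exact_mod_cast le_top))]
    have hb := hp i hin x
    have hbase1 : (1:ℝ) ≤ A * (1+t)^kp := one_le_mul_of_one_le_of_one_le hA1 hpow1
    calc ‖s • iteratedFDeriv ℝ i (fun v : E => Real.sqrt (1+‖v‖^2)) x‖
        ≤ |s| * ‖iteratedFDeriv ℝ i (fun v : E => Real.sqrt (1+‖v‖^2)) x‖ := by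
          simpa using norm_smul_le s (iteratedFDeriv ℝ i (fun v : E => Real.sqrt (1+‖v‖^2)) x)
      _ ≤ |s| * (Cp * (1+t)^kp) := by gcongr
      _ = (|s| * Cp) * (1+t)^kp := by ring
      _ ≤ A * (1+t)^kp := by gcongr; exact le_max_right _ _
      _ ≤ (A * (1+t)^kp)^i := le_self_pow₀ hbase1 (Nat.one_le_iff_ne_zero.mp h1i)

lemma edds_poly_le_exp (p : ℕ) {ε : ℝ} (hε : 0 < ε) :
    ∃ C : ℝ, 0 < C ∧ ∀ t : ℝ, 0 ≤ t → (1+t)^p ≤ C * Real.exp (ε * t) := by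
  refine ⟨p.factorial * Real.exp ε / ε^p, by positivity, fun t ht => ?_⟩
  have h1 : (ε*(1+t))^p / p.factorial ≤ Real.exp (ε*(1+t)) := by
    refine le_trans ?_ (Real.sum_le_exp_of_nonneg (by positivity) (p+1))
    exact Finset.single_le_sum (f := fun i => (ε*(1+t))^i / (i.factorial : ℝ))
      (fun i _ => by positivity) (Finset.self_mem_range_succ p)
  have h2 : Real.exp (ε*(1+t)) = Real.exp ε * Real.exp (ε*t) := by
    rw [← Real.exp_add]; ring_nf
  have h3 : ε^p * (1+t)^p ≤ p.factorial * (Real.exp ε * Real.exp (ε*t)) := by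
    rw [← mul_pow, ← h2]
    have := (div_le_iff₀ (show (0:ℝ) < p.factorial by positivity)).mp h1
    linarith
  rw [div_mul_eq_mul_div, le_div_iff₀ (by positivity)]
  nlinarith [h3]

lemma edds_decay_helper {r r' : ℝ} (hr : 0 < r) (hrr' : r < r') (k m : ℕ) :
    ∃ C : ℝ, 0 < C ∧ ∀ t : ℝ, 0 ≤ t →
      t^k * ((1+t)^m * (Real.exp (-r' * t) * Real.exp (r * (1+t)))) ≤ C := by
  obtain ⟨C, hC0, hC⟩ := edds_poly_le_exp (k+m) (show 0 < r'-r by linarith)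
  refine ⟨Real.exp r * C, by positivity, fun t ht => ?_⟩
  have h1 : t^k * (1+t)^m ≤ (1+t)^(k+m) := by
    rw [pow_add]
    gcongr
    linarith
  have h2 : Real.exp (-r' * t) * Real.exp (r * (1+t))
      = Real.exp r * Real.exp (-((r'-r) * t)) := by
    rw [← Real.exp_add, ← Real.exp_add]; ring_nf
  have h3 : (1+t)^(k+m) * Real.exp (-((r'-r) * t)) ≤ C := by
    calc (1+t)^(k+m) * Real.exp (-((r'-r) * t))
        ≤ (C * Real.exp ((r'-r) * t)) * Real.exp (-((r'-r) * t)) := by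
          gcongr
          exact hC t ht
      _ = C := by rw [mul_assoc, ← Real.exp_add]; simp
  calc t^k * ((1+t)^m * (Real.exp (-r' * t) * Real.exp (r * (1+t))))
      = (t^k * (1+t)^m) * (Real.exp r * Real.exp (-((r'-r) * t))) := by rw [h2]; ring
    _ ≤ (1+t)^(k+m) * (Real.exp r * Real.exp (-((r'-r) * t))) := by
        have : (0:ℝ) ≤ Real.exp r * Real.exp (-((r'-r)*t)) := by positivity
        exact mul_le_mul_of_nonneg_right h1 this
    _ = Real.exp r * ((1+t)^(k+m) * Real.exp (-((r'-r) * t))) := by ring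
    _ ≤ Real.exp r * C := by gcongr

lemma edds_contDiff_exp_psi (s : ℝ) :
    ContDiff ℝ ∞ (fun v : E => Real.exp (s * Real.sqrt (1 + ‖v‖^2))) :=
  (contDiff_const.mul edds_contDiff_psi).exp

lemma edds_contDiff_cexp_psi (s : ℝ) :
    ContDiff ℝ ∞ (fun v : E => ((Real.exp (s * Real.sqrt (1 + ‖v‖^2)) : ℝ) : ℂ)) :=
  Complex.ofRealCLM.contDiff.comp (edds_contDiff_exp_psi s)

lemma edds_complex_exp_psi_norm (s : ℝ) (n : ℕ) (x : E) :
    ‖iteratedFDeriv ℝ n (fun v : E => ((Real.exp (s * Real.sqrt (1 + ‖v‖^2)) : ℝ) : ℂ)) x‖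
      = ‖iteratedFDeriv ℝ n (fun v : E => Real.exp (s * Real.sqrt (1 + ‖v‖^2))) x‖ := by
  have h := Complex.ofRealLI.norm_iteratedFDeriv_comp_left (𝕜 := ℝ)
      (f := fun v : E => Real.exp (s * Real.sqrt (1 + ‖v‖^2))) (n := ∞)
      ((edds_contDiff_exp_psi s).contDiffAt (x := x)) (i := n) (mod_cast le_top)
  have hcomp : (⇑Complex.ofRealLI ∘ fun v : E => Real.exp (s * Real.sqrt (1 + ‖v‖^2)))
      = fun v : E => ((Real.exp (s * Real.sqrt (1 + ‖v‖^2)) : ℝ) : ℂ) := rfl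
  rwa [hcomp] at h

end aux

/-- For a smooth function `f : ℝ^d → ℂ` and `R > 0`, the following are equivalent:
(1) all iterated derivatives of `f` decay like `exp (-r‖v‖)` for every `r < R`;
(2) for every `r < R`, `f(v) · exp (r √(1 + ‖v‖²))` is a Schwartz function. -/
theorem exp_decay_derivs_iff_schwartz_mul_exp
    (d : ℕ) (R : ℝ) (hR : 0 < R) (f : EuclideanSpace ℝ (Fin d) → ℂ)
    (hf : ContDiff ℝ (⊤ : ℕ∞) f) :
    (∀ r : ℝ, 0 < r → r < R → ∀ k : ℕ, ∃ C > 0, ∀ v : EuclideanSpace ℝ (Fin d),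
        ‖iteratedFDeriv ℝ k f v‖ ≤ C * Real.exp (-r * ‖v‖)) ↔
    (∀ r : ℝ, 0 < r → r < R →
        ∃ g : SchwartzMap (EuclideanSpace ℝ (Fin d)) ℂ,
          ∀ v : EuclideanSpace ℝ (Fin d),
            g v = f v * ↑(Real.exp (r * Real.sqrt (1 + ‖v‖ ^ 2)))) := by
  have hfC : ContDiff ℝ ∞ f := hf
  constructor
  · intro h1 r hr0 hrR
    set r' : ℝ := (r + R) / 2 with hr'def
    have hrr' : r < r' := by rw [hr'def]; linarith
    have hr'0 : 0 < r' := lt_trans hr0 hrr'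
    have hr'R : r' < R := by rw [hr'def]; linarith
    choose Cf hCfpos hCf using h1 r' hr'0 hr'R
    have hEc : ContDiff ℝ ∞
        (fun v : EuclideanSpace ℝ (Fin d) => ((Real.exp (r * Real.sqrt (1 + ‖v‖^2)) : ℝ) : ℂ)) :=
      edds_contDiff_cexp_psi r
    refine ⟨⟨fun v => f v * ((Real.exp (r * Real.sqrt (1 + ‖v‖^2)) : ℝ) : ℂ),
      hfC.mul hEc, ?_⟩, fun v => rfl⟩
    intro k n
    choose kE CE hCE0 hCE using
      fun j => edds_exp_psi_bound (E := EuclideanSpace ℝ (Fin d)) r j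
    choose DD hDD0 hDD using fun i : ℕ => edds_decay_helper hr0 hrr' k (kE (n - i))
    refine ⟨∑ i ∈ Finset.range (n+1), (n.choose i : ℝ) * (Cf i * (CE (n-i) * DD i)),
      fun x => ?_⟩
    have hmul := norm_iteratedFDeriv_mul_le (𝕜 := ℝ) (A := ℂ) hfC hEc x
      (n := n) (mod_cast le_top)
    calc ‖x‖^k * ‖iteratedFDeriv ℝ n
          (fun v => f v * ((Real.exp (r * Real.sqrt (1 + ‖v‖^2)) : ℝ) : ℂ)) x‖
        ≤ ‖x‖^k * ∑ i ∈ Finset.range (n+1), (n.choose i : ℝ) *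
            ‖iteratedFDeriv ℝ i f x‖ *
            ‖iteratedFDeriv ℝ (n-i)
              (fun v => ((Real.exp (r * Real.sqrt (1 + ‖v‖^2)) : ℝ) : ℂ)) x‖ :=
          mul_le_mul_of_nonneg_left hmul (by positivity)
      _ = ∑ i ∈ Finset.range (n+1), ‖x‖^k * ((n.choose i : ℝ) *
            ‖iteratedFDeriv ℝ i f x‖ *
            ‖iteratedFDeriv ℝ (n-i)
              (fun v => ((Real.exp (r * Real.sqrt (1 + ‖v‖^2)) : ℝ) : ℂ)) x‖) :=
          Finset.mul_sum _ _ _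
      _ ≤ ∑ i ∈ Finset.range (n+1), (n.choose i : ℝ) * (Cf i * (CE (n-i) * DD i)) := by
          refine Finset.sum_le_sum (fun i _ => ?_)
          have ha : ‖iteratedFDeriv ℝ i f x‖ ≤ Cf i * Real.exp (-r' * ‖x‖) := hCf i x
          have hbE : ‖iteratedFDeriv ℝ (n-i)
              (fun v => ((Real.exp (r * Real.sqrt (1 + ‖v‖^2)) : ℝ) : ℂ)) x‖
              ≤ CE (n-i) * (1+‖x‖)^(kE (n-i)) * Real.exp (r * (1+‖x‖)) := by
            rw [edds_complex_exp_psi_norm]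
            refine (hCE (n-i) x).trans ?_
            have hex : Real.exp (r * Real.sqrt (1+‖x‖^2)) ≤ Real.exp (r * (1+‖x‖)) :=
              Real.exp_le_exp.2 (mul_le_mul_of_nonneg_left (edds_psi_le x) hr0.le)
            exact mul_le_mul_of_nonneg_left hex
              (mul_nonneg (hCE0 _) (by positivity))
          have hstep : (n.choose i : ℝ) * ‖iteratedFDeriv ℝ i f x‖ *
              ‖iteratedFDeriv ℝ (n-i)
                (fun v => ((Real.exp (r * Real.sqrt (1 + ‖v‖^2)) : ℝ) : ℂ)) x‖
              ≤ (n.choose i : ℝ) * (Cf i * Real.exp (-r' * ‖x‖)) *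
                (CE (n-i) * (1+‖x‖)^(kE (n-i)) * Real.exp (r * (1+‖x‖))) := by
            refine mul_le_mul (mul_le_mul_of_nonneg_left ha (by positivity)) hbE
              (norm_nonneg _) ?_
            exact mul_nonneg (by positivity)
              (mul_nonneg (hCfpos i).le (Real.exp_pos _).le)
          calc ‖x‖^k * ((n.choose i : ℝ) * ‖iteratedFDeriv ℝ i f x‖ *
                ‖iteratedFDeriv ℝ (n-i)
                  (fun v => ((Real.exp (r * Real.sqrt (1 + ‖v‖^2)) : ℝ) : ℂ)) x‖)
              ≤ ‖x‖^k * ((n.choose i : ℝ) * (Cf i * Real.exp (-r' * ‖x‖)) *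
                (CE (n-i) * (1+‖x‖)^(kE (n-i)) * Real.exp (r * (1+‖x‖)))) :=
                mul_le_mul_of_nonneg_left hstep (by positivity)
            _ = (n.choose i : ℝ) * (Cf i * (CE (n-i) *
                (‖x‖^k * ((1+‖x‖)^(kE (n-i)) *
                  (Real.exp (-r' * ‖x‖) * Real.exp (r * (1+‖x‖))))))) := by ring
            _ ≤ (n.choose i : ℝ) * (Cf i * (CE (n-i) * DD i)) := by
                have h5 := hDD i ‖x‖ (norm_nonneg x)
                have h6 := mul_le_mul_of_nonneg_left h5 (hCE0 (n-i))
                have h7 := mul_le_mul_of_nonneg_left h6 (hCfpos i).le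
                exact mul_le_mul_of_nonneg_left h7 (by positivity)
  · intro h2 r hr0 hrR k
    set r' : ℝ := (r + R) / 2 with hr'def
    have hrr' : r < r' := by rw [hr'def]; linarith
    have hr'0 : 0 < r' := lt_trans hr0 hrr'
    have hr'R : r' < R := by rw [hr'def]; linarith
    obtain ⟨g, hg⟩ := h2 r' hr'0 hr'R
    have hfeq : f = fun v => g v * ((Real.exp (-r' * Real.sqrt (1 + ‖v‖^2)) : ℝ) : ℂ) := by
      funext v
      rw [hg v, mul_assoc, ← Complex.ofReal_mul, ← Real.exp_add]
      simp
    choose kE CE hCE0 hCE using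
      fun j => edds_exp_psi_bound (E := EuclideanSpace ℝ (Fin d)) (-r') j
    choose Bg hBgpos hBg' using fun i : ℕ => g.decay 0 i
    choose P hP0 hP using
      fun i : ℕ => edds_poly_le_exp (kE (k - i)) (show 0 < r' - r by linarith)
    have hsum0 : 0 ≤ ∑ i ∈ Finset.range (k+1),
        (k.choose i : ℝ) * (Bg i * (CE (k-i) * P i)) :=
      Finset.sum_nonneg fun i _ => mul_nonneg (by positivity)
        (mul_nonneg (hBgpos i).le (mul_nonneg (hCE0 _) (hP0 i).le))
    refine ⟨(∑ i ∈ Finset.range (k+1), (k.choose i : ℝ) * (Bg i * (CE (k-i) * P i))) + 1,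
      by linarith, fun v => ?_⟩
    rw [hfeq]
    have hEc' : ContDiff ℝ ∞
        (fun v : EuclideanSpace ℝ (Fin d) =>
          ((Real.exp (-r' * Real.sqrt (1 + ‖v‖^2)) : ℝ) : ℂ)) := edds_contDiff_cexp_psi (-r')
    have hmul := norm_iteratedFDeriv_mul_le (𝕜 := ℝ) (A := ℂ) g.smooth' hEc' v
      (n := k) (mod_cast le_top)
    refine hmul.trans ?_
    have hterm : ∀ i ∈ Finset.range (k+1),
        (k.choose i : ℝ) * ‖iteratedFDeriv ℝ i (⇑g) v‖ *
          ‖iteratedFDeriv ℝ (k-i)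
            (fun v => ((Real.exp (-r' * Real.sqrt (1 + ‖v‖^2)) : ℝ) : ℂ)) v‖
        ≤ ((k.choose i : ℝ) * (Bg i * (CE (k-i) * P i))) * Real.exp (-r * ‖v‖) := by
      intro i _
      have hgi : ‖iteratedFDeriv ℝ i (⇑g) v‖ ≤ Bg i := by simpa using hBg' i v
      have hexp1 : Real.exp (-r' * Real.sqrt (1+‖v‖^2)) ≤ Real.exp (-r' * ‖v‖) := by
        apply Real.exp_le_exp.2
        nlinarith [edds_le_psi v]
      have hEi : ‖iteratedFDeriv ℝ (k-i)
          (fun v => ((Real.exp (-r' * Real.sqrt (1 + ‖v‖^2)) : ℝ) : ℂ)) v‖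
          ≤ CE (k-i) * (1+‖v‖)^(kE (k-i)) * Real.exp (-r' * ‖v‖) := by
        rw [edds_complex_exp_psi_norm]
        exact (hCE (k-i) v).trans
          (mul_le_mul_of_nonneg_left hexp1 (mul_nonneg (hCE0 _) (by positivity)))
      have hpoly := hP i ‖v‖ (norm_nonneg v)
      calc (k.choose i : ℝ) * ‖iteratedFDeriv ℝ i (⇑g) v‖ *
            ‖iteratedFDeriv ℝ (k-i)
              (fun v => ((Real.exp (-r' * Real.sqrt (1 + ‖v‖^2)) : ℝ) : ℂ)) v‖
          ≤ (k.choose i : ℝ) * Bg i *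
            (CE (k-i) * (1+‖v‖)^(kE (k-i)) * Real.exp (-r' * ‖v‖)) := by
            refine mul_le_mul (mul_le_mul_of_nonneg_left hgi (by positivity)) hEi
              (norm_nonneg _) ?_
            exact mul_nonneg (by positivity) (hBgpos i).le
        _ ≤ (k.choose i : ℝ) * Bg i *
            (CE (k-i) * (P i * Real.exp ((r'-r) * ‖v‖)) * Real.exp (-r' * ‖v‖)) := by
            refine mul_le_mul_of_nonneg_left ?_
              (mul_nonneg (by positivity) (hBgpos i).le)
            exact mul_le_mul_of_nonneg_right
              (mul_le_mul_of_nonneg_left hpoly (hCE0 _)) (Real.exp_pos _).le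
        _ = ((k.choose i : ℝ) * (Bg i * (CE (k-i) * P i))) *
            (Real.exp ((r'-r) * ‖v‖) * Real.exp (-r' * ‖v‖)) := by ring
        _ = ((k.choose i : ℝ) * (Bg i * (CE (k-i) * P i))) * Real.exp (-r * ‖v‖) := by
            rw [← Real.exp_add, show (r'-r) * ‖v‖ + -r' * ‖v‖ = -r * ‖v‖ by ring]
    calc (∑ i ∈ Finset.range (k+1), (k.choose i : ℝ) * ‖iteratedFDeriv ℝ i (⇑g) v‖ *
          ‖iteratedFDeriv ℝ (k-i)
            (fun v => ((Real.exp (-r' * Real.sqrt (1 + ‖v‖^2)) : ℝ) : ℂ)) v‖)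
        ≤ ∑ i ∈ Finset.range (k+1),
            ((k.choose i : ℝ) * (Bg i * (CE (k-i) * P i))) * Real.exp (-r * ‖v‖) :=
          Finset.sum_le_sum hterm
      _ = (∑ i ∈ Finset.range (k+1),
            (k.choose i : ℝ) * (Bg i * (CE (k-i) * P i))) * Real.exp (-r * ‖v‖) :=
          (Finset.sum_mul _ _ _).symm
      _ ≤ ((∑ i ∈ Finset.range (k+1),
            (k.choose i : ℝ) * (Bg i * (CE (k-i) * P i))) + 1) * Real.exp (-r * ‖v‖) :=
          mul_le_mul_of_nonneg_right (by linarith) (Real.exp_pos _).le
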